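/- arXiv:2410.08077 — 3 statements merged into one kernel-verified Lean document; each statement's English description precedes it below -/
import Mathlib

section
/- Let r be a nonnegative integer, let G be a (P5 + rK1)-free graph, and let C be a finite set of connected induced subgraphs of G. Then the blob graph H(G, C) is also (P5 + rK1)-free. -/
open SimpleGraph

/-- `G` contains no induced subgraph isomorphic to `H`. -/
def SimpleGraph.InducedFree {α β : Type*} (G : SimpleGraph α) (H : SimpleGraph β) : Prop :=
  IsEmpty (H ↪g G)

/-- The graph obtained from `G` by contracting the edge `uv`: delete `u` and `v` and
add a new vertex (`none`) adjacent to `(N(u) ∪ N(v)) \ {u, v}`. -/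
def SimpleGraph.contract {α : Type*} (G : SimpleGraph α) (u v : α) :
    SimpleGraph (Option {x : α // x ≠ u ∧ x ≠ v}) where
  Adj a b :=
    match a, b with
    | none, none => False
    | none, some x => G.Adj u x.1 ∨ G.Adj v x.1
    | some x, none => G.Adj u x.1 ∨ G.Adj v x.1
    | some x, some y => G.Adj x.1 y.1
  symm := by
    constructor
    rintro (_ | x) (_ | y) h
    · exact h
    · exact h
    · exact h
    · exact h.symm
  loopless := by
    constructor
    rintro (_ | x) h
    · exact h
    · exact G.loopless.irrefl _ h

/-- The disjoint union of a path on 5 vertices and `r` isolated vertices. -/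
def P5rK1 (r : ℕ) : SimpleGraph (Fin 5 ⊕ Fin r) :=
  pathGraph 5 ⊕g (⊥ : SimpleGraph (Fin r))

/-- `u` and `v` are true twins: adjacent with the same neighbours outside the pair. -/
def SimpleGraph.TrueTwins {α : Type*} (G : SimpleGraph α) (u v : α) : Prop :=
  G.Adj u v ∧ ∀ w, w ≠ u → w ≠ v → (G.Adj u w ↔ G.Adj v w)

/-- The external neighbourhood of a set `S`. -/
def SimpleGraph.extN {α : Type*} (G : SimpleGraph α) (S : Set α) : Set α :=
  {v | v ∉ S ∧ ∃ u ∈ S, G.Adj u v}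

/-- `s` is an independent set of `G`. -/
def SimpleGraph.IsIndep {α : Type*} (G : SimpleGraph α) (s : Set α) : Prop :=
  ∀ ⦃x⦄, x ∈ s → ∀ ⦃y⦄, y ∈ s → ¬ G.Adj x y

/-- `X` and `Y` are anticomplete: disjoint and with no edges between them. -/
def SimpleGraph.Anticomplete {α : Type*} (G : SimpleGraph α) (X Y : Set α) : Prop :=
  Disjoint X Y ∧ ∀ x ∈ X, ∀ y ∈ Y, ¬ G.Adj x y

/-- The blob graph of a family `𝒞` of (vertex sets of) subgraphs of `G`. -/
def blob {α : Type*} (G : SimpleGraph α) (𝒞 : Set (Set α)) : SimpleGraph 𝒞 where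
  Adj C C' := C ≠ C' ∧ ((C.1 ∩ C'.1).Nonempty ∨ ∃ x ∈ C.1, ∃ y ∈ C'.1, G.Adj x y)
  symm := by
    constructor
    rintro C C' ⟨hne, h⟩
    refine ⟨hne.symm, ?_⟩
    rcases h with h | ⟨x, hx, y, hy, hxy⟩
    · exact Or.inl (by rwa [Set.inter_comm])
    · exact Or.inr ⟨y, hy, x, hx, hxy.symm⟩
  loopless := by constructor; rintro C ⟨hne, -⟩; exact hne rfl

/-- Linear forest: every connected component is a path. -/
def IsLinearForest {β : Type*} [Fintype β] (H : SimpleGraph β) : Prop :=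
  ∀ c : H.ConnectedComponent, ∃ n, Nonempty ((H.induce c.supp) ≃g pathGraph n)


namespace BlobAux

variable {α : Type*} {G : SimpleGraph α}


lemma walk_in_set {s : Set α} (h : (G.induce s).Connected) {x y : α} (hx : x ∈ s) (hy : y ∈ s) :
    ∃ w : G.Walk x y, ∀ v ∈ w.support, v ∈ s := by
  obtain ⟨w0⟩ := h.preconnected ⟨x, hx⟩ ⟨y, hy⟩
  refine ⟨w0.map (SimpleGraph.Embedding.induce s).toHom, ?_⟩
  intro v hv
  change v ∈ (w0.map (SimpleGraph.Embedding.induce s).toHom).support at hv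
  rw [SimpleGraph.Walk.support_map, List.mem_map] at hv
  obtain ⟨u, -, rfl⟩ := hv
  exact u.2

lemma join_walk {a b : α} (h : a = b ∨ G.Adj a b) :
    ∃ w : G.Walk a b, ∀ v ∈ w.support, v = a ∨ v = b := by
  rcases h with rfl | h
  · exact ⟨Walk.nil, by simp⟩
  · exact ⟨Walk.cons h Walk.nil, by simp⟩

lemma core (C0 C1 C2 C3 C4 : Set α)
    (h1c : (G.induce C1).Connected) (h2c : (G.induce C2).Connected)
    (h3c : (G.induce C3).Connected)
    (t01 : ∃ a ∈ C0, ∃ b ∈ C1, a = b ∨ G.Adj a b)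
    (t12 : ∃ a ∈ C1, ∃ b ∈ C2, a = b ∨ G.Adj a b)
    (t23 : ∃ a ∈ C2, ∃ b ∈ C3, a = b ∨ G.Adj a b)
    (t34 : ∃ a ∈ C3, ∃ b ∈ C4, a = b ∨ G.Adj a b)
    (a02 : ∀ a ∈ C0, ∀ b ∈ C2, a ≠ b ∧ ¬ G.Adj a b)
    (a03 : ∀ a ∈ C0, ∀ b ∈ C3, a ≠ b ∧ ¬ G.Adj a b)
    (a04 : ∀ a ∈ C0, ∀ b ∈ C4, a ≠ b ∧ ¬ G.Adj a b)
    (a13 : ∀ a ∈ C1, ∀ b ∈ C3, a ≠ b ∧ ¬ G.Adj a b)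
    (a14 : ∀ a ∈ C1, ∀ b ∈ C4, a ≠ b ∧ ¬ G.Adj a b)
    (a24 : ∀ a ∈ C2, ∀ b ∈ C4, a ≠ b ∧ ¬ G.Adj a b) :
    ∃ p0 p1 p2 p3 p4 : α,
      p0 ∈ C0 ∪ C1 ∪ C2 ∪ C3 ∪ C4 ∧ p1 ∈ C0 ∪ C1 ∪ C2 ∪ C3 ∪ C4 ∧
      p2 ∈ C0 ∪ C1 ∪ C2 ∪ C3 ∪ C4 ∧ p3 ∈ C0 ∪ C1 ∪ C2 ∪ C3 ∪ C4 ∧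
      p4 ∈ C0 ∪ C1 ∪ C2 ∪ C3 ∪ C4 ∧
      G.Adj p0 p1 ∧ G.Adj p1 p2 ∧ G.Adj p2 p3 ∧ G.Adj p3 p4 ∧
      (p0 ≠ p2 ∧ ¬ G.Adj p0 p2) ∧ (p0 ≠ p3 ∧ ¬ G.Adj p0 p3) ∧
      (p0 ≠ p4 ∧ ¬ G.Adj p0 p4) ∧ (p1 ≠ p3 ∧ ¬ G.Adj p1 p3) ∧
      (p1 ≠ p4 ∧ ¬ G.Adj p1 p4) ∧ (p2 ≠ p4 ∧ ¬ G.Adj p2 p4) := by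
  classical
  set U : Set α := C0 ∪ C1 ∪ C2 ∪ C3 ∪ C4 with hU
  -- existence of a walk from C0 to C4 inside U
  obtain ⟨x01, hx01, y01, hy01, e01⟩ := t01
  obtain ⟨x12, hx12, y12, hy12, e12⟩ := t12
  obtain ⟨x23, hx23, y23, hy23, e23⟩ := t23
  obtain ⟨x34, hx34, y34, hy34, e34⟩ := t34
  obtain ⟨wA, hA⟩ := walk_in_set h1c hy01 hx12
  obtain ⟨wB, hB⟩ := walk_in_set h2c hy12 hx23
  obtain ⟨wC, hC⟩ := walk_in_set h3c hy23 hx34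
  obtain ⟨w01, hw01⟩ := join_walk (G := G) e01
  obtain ⟨w12, hw12⟩ := join_walk (G := G) e12
  obtain ⟨w23, hw23⟩ := join_walk (G := G) e23
  obtain ⟨w34, hw34⟩ := join_walk (G := G) e34
  have hex : ∃ n : ℕ, ∃ x y : α, x ∈ C0 ∧ y ∈ C4 ∧
      ∃ w : G.Walk x y, (∀ v ∈ w.support, v ∈ U) ∧ w.length = n := by
    refine ⟨_, x01, y34, hx01, hy34,
      w01.append (wA.append (w12.append (wB.append (w23.append (wC.append w34))))), ?_, rfl⟩
    intro v hv
    simp only [Walk.mem_support_append_iff] at hv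
    have m0 : ∀ z, z ∈ C0 ∨ z ∈ C1 ∨ z ∈ C2 ∨ z ∈ C3 ∨ z ∈ C4 → z ∈ U := by
      rw [hU]; intro z hz; rcases hz with h|h|h|h|h <;> simp [h]
    rcases hv with h|h|h|h|h|h|h
    · rcases hw01 v h with rfl | rfl
      · exact m0 _ (Or.inl hx01)
      · exact m0 _ (Or.inr (Or.inl hy01))
    · exact m0 _ (Or.inr (Or.inl (hA v h)))
    · rcases hw12 v h with rfl | rfl
      · exact m0 _ (Or.inr (Or.inl hx12))
      · exact m0 _ (Or.inr (Or.inr (Or.inl hy12)))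
    · exact m0 _ (Or.inr (Or.inr (Or.inl (hB v h))))
    · rcases hw23 v h with rfl | rfl
      · exact m0 _ (Or.inr (Or.inr (Or.inl hx23)))
      · exact m0 _ (Or.inr (Or.inr (Or.inr (Or.inl hy23))))
    · exact m0 _ (Or.inr (Or.inr (Or.inr (Or.inl (hC v h)))))
    · rcases hw34 v h with rfl | rfl
      · exact m0 _ (Or.inr (Or.inr (Or.inr (Or.inl hx34))))
      · exact m0 _ (Or.inr (Or.inr (Or.inr (Or.inr hy34))))
  obtain ⟨m, hm⟩ : ∃ m, Nat.find hex = m := ⟨_, rfl⟩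
  have spec := Nat.find_spec hex
  rw [hm] at spec
  obtain ⟨x, y, hx, hy, w, hwU, hwl⟩ := spec
  have hmin : ∀ {x' y' : α}, x' ∈ C0 → y' ∈ C4 → ∀ w' : G.Walk x' y',
      (∀ v ∈ w'.support, v ∈ U) → ¬ w'.length < m := by
    intro x' y' hx' hy' w' hs' hlt
    rw [← hm] at hlt
    exact Nat.find_min hex hlt ⟨x', y', hx', hy', w', hs', rfl⟩
  clear hA hB hC hw01 hw12 hw23 hw34 hm hex wA wB wC w01 w12 w23 w34
  -- case analysis on the walk
  cases w with
  | nil => exact absurd rfl (a04 x hx x hy).1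
  | @cons _ b1 _ h1 t1 =>
    cases t1 with
    | nil => exact absurd h1 (a04 x hx y hy).2
    | @cons _ b2 _ h2 t2 =>
      have hb1U : b1 ∈ U := hwU b1 (by simp)
      cases t2 with
      | nil =>
        rcases hb1U with ((((h|h)|h)|h)|h)
        · exact ((a04 b1 h y hy).2 h2).elim
        · exact ((a14 b1 h y hy).2 h2).elim
        · exact ((a24 b1 h y hy).2 h2).elim
        · exact ((a03 x hx b1 h).2 h1).elim
        · exact ((a04 x hx b1 h).2 h1).elim
      | @cons _ b3 _ h3 t3 =>
        have hb2U : b2 ∈ U := hwU b2 (by simp)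
        cases t3 with
        | nil =>
          have hb1' : b1 ∈ C0 ∪ C1 := by
            rcases hb1U with ((((h|h)|h)|h)|h)
            · exact Or.inl h
            · exact Or.inr h
            · exact absurd h1 (a02 x hx b1 h).2
            · exact absurd h1 (a03 x hx b1 h).2
            · exact absurd h1 (a04 x hx b1 h).2
          have hb2' : b2 ∈ C3 ∪ C4 := by
            rcases hb2U with ((((h|h)|h)|h)|h)
            · exact absurd h3 (a04 b2 h y hy).2
            · exact absurd h3 (a14 b2 h y hy).2
            · exact absurd h3 (a24 b2 h y hy).2
            · exact Or.inl h
            · exact Or.inr h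
          rcases hb1' with h|h <;> rcases hb2' with h'|h'
          · exact ((a03 b1 h b2 h').2 h2).elim
          · exact ((a04 b1 h b2 h').2 h2).elim
          · exact ((a13 b1 h b2 h').2 h2).elim
          · exact ((a14 b1 h b2 h').2 h2).elim
        | @cons _ b4 _ h4 t4 =>
          -- walk has length ≥ 4 : extract the induced P5
          have hb3U : b3 ∈ U := hwU b3 (by simp)
          have hb4U : b4 ∈ U := hwU b4 (by
            simp only [Walk.support_cons, List.mem_cons]
            exact Or.inr (Or.inr (Or.inr (Or.inr t4.start_mem_support))))
          have hxU : x ∈ U := hwU x (by simp)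
          simp only [Walk.length_cons] at hwl
          -- helper: sub-support conditions
          have hsub : ∀ v ∈ t4.support, v ∈ U := by
            intro v hv; apply hwU
            simp only [Walk.support_cons, List.mem_cons]
            exact Or.inr (Or.inr (Or.inr (Or.inr hv)))
          have sup0 : ∀ v ∈ t4.support, v ∈ U := hsub
          have shortcut : ∀ (w' : G.Walk x y), (∀ v ∈ w'.support, v ∈ U) →
              w'.length < m → False := fun w' hs hl => hmin hx hy w' hs hl
          have hn02 : x ≠ b2 ∧ ¬ G.Adj x b2 := by
            constructor
            · intro e
              refine shortcut ((Walk.cons h3 (Walk.cons h4 t4)).copy e.symm rfl) ?_ ?_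
              · intro v hv
                simp only [Walk.support_copy, Walk.support_cons, List.mem_cons] at hv
                rcases hv with rfl|rfl|hv
                exacts [hb2U, hb3U, hsub v hv]
              · simp only [Walk.length_copy, Walk.length_cons]; omega
            · intro e
              refine shortcut (Walk.cons e (Walk.cons h3 (Walk.cons h4 t4))) ?_ ?_
              · intro v hv
                simp only [Walk.support_copy, Walk.support_cons, List.mem_cons] at hv
                rcases hv with rfl|rfl|rfl|hv
                exacts [hxU, hb2U, hb3U, hsub v hv]
              · simp only [Walk.length_cons]; omega
          have hn03 : x ≠ b3 ∧ ¬ G.Adj x b3 := by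
            constructor
            · intro e
              refine shortcut ((Walk.cons h4 t4).copy e.symm rfl) ?_ ?_
              · intro v hv
                simp only [Walk.support_copy, Walk.support_cons, List.mem_cons] at hv
                rcases hv with rfl|hv
                exacts [hb3U, hsub v hv]
              · simp only [Walk.length_copy, Walk.length_cons]; omega
            · intro e
              refine shortcut (Walk.cons e (Walk.cons h4 t4)) ?_ ?_
              · intro v hv
                simp only [Walk.support_copy, Walk.support_cons, List.mem_cons] at hv
                rcases hv with rfl|rfl|hv
                exacts [hxU, hb3U, hsub v hv]
              · simp only [Walk.length_cons]; omega
          have hn04 : x ≠ b4 ∧ ¬ G.Adj x b4 := by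
            constructor
            · intro e
              refine shortcut (t4.copy e.symm rfl) ?_ ?_
              · intro v hv
                simp only [Walk.support_copy, Walk.support_cons, List.mem_cons] at hv
                rcases hv with hv
                exacts [hsub v hv]
              · simp only [Walk.length_copy, Walk.length_cons]; omega
            · intro e
              refine shortcut (Walk.cons e t4) ?_ ?_
              · intro v hv
                simp only [Walk.support_copy, Walk.support_cons, List.mem_cons] at hv
                rcases hv with rfl|hv
                exacts [hxU, hsub v hv]
              · simp only [Walk.length_cons]; omega
          have hn13 : b1 ≠ b3 ∧ ¬ G.Adj b1 b3 := by
            constructor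
            · intro e
              refine shortcut (Walk.cons h1 ((Walk.cons h4 t4).copy e.symm rfl)) ?_ ?_
              · intro v hv
                simp only [Walk.support_copy, Walk.support_cons, List.mem_cons] at hv
                rcases hv with rfl|rfl|hv
                exacts [hxU, hb3U, hsub v hv]
              · simp only [Walk.length_copy, Walk.length_cons]; omega
            · intro e
              refine shortcut (Walk.cons h1 (Walk.cons e (Walk.cons h4 t4))) ?_ ?_
              · intro v hv
                simp only [Walk.support_copy, Walk.support_cons, List.mem_cons] at hv
                rcases hv with rfl|rfl|rfl|hv
                exacts [hxU, hb1U, hb3U, hsub v hv]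
              · simp only [Walk.length_cons]; omega
          have hn14 : b1 ≠ b4 ∧ ¬ G.Adj b1 b4 := by
            constructor
            · intro e
              refine shortcut (Walk.cons h1 (t4.copy e.symm rfl)) ?_ ?_
              · intro v hv
                simp only [Walk.support_copy, Walk.support_cons, List.mem_cons] at hv
                rcases hv with rfl|hv
                exacts [hxU, hsub v hv]
              · simp only [Walk.length_copy, Walk.length_cons]; omega
            · intro e
              refine shortcut (Walk.cons h1 (Walk.cons e t4)) ?_ ?_
              · intro v hv
                simp only [Walk.support_copy, Walk.support_cons, List.mem_cons] at hv
                rcases hv with rfl|rfl|hv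
                exacts [hxU, hb1U, hsub v hv]
              · simp only [Walk.length_cons]; omega
          have hn24 : b2 ≠ b4 ∧ ¬ G.Adj b2 b4 := by
            constructor
            · intro e
              refine shortcut (Walk.cons h1 (Walk.cons h2 (t4.copy e.symm rfl))) ?_ ?_
              · intro v hv
                simp only [Walk.support_copy, Walk.support_cons, List.mem_cons] at hv
                rcases hv with rfl|rfl|hv
                exacts [hxU, hb1U, hsub v hv]
              · simp only [Walk.length_copy, Walk.length_cons]; omega
            · intro e
              refine shortcut (Walk.cons h1 (Walk.cons h2 (Walk.cons e t4))) ?_ ?_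
              · intro v hv
                simp only [Walk.support_copy, Walk.support_cons, List.mem_cons] at hv
                rcases hv with rfl|rfl|rfl|hv
                exacts [hxU, hb1U, hb2U, hsub v hv]
              · simp only [Walk.length_cons]; omega
          exact ⟨x, b1, b2, b3, b4, hxU, hb1U, hb2U, hb3U, hb4U, h1, h2, h3, h4,
            hn02, hn03, hn04, hn13, hn14, hn24⟩

lemma touch_of_adj {𝒞 : Set (Set α)} {C C' : 𝒞} (h : (blob G 𝒞).Adj C C') :
    ∃ a ∈ (C : Set α), ∃ b ∈ (C' : Set α), a = b ∨ G.Adj a b := by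
  rcases h.2 with ⟨v, hv⟩ | ⟨a, ha, b, hb, hab⟩
  · exact ⟨v, hv.1, v, hv.2, Or.inl rfl⟩
  · exact ⟨a, ha, b, hb, Or.inr hab⟩

lemma anti_of_not_adj {𝒞 : Set (Set α)} {C C' : 𝒞} (hne : C ≠ C')
    (h : ¬ (blob G 𝒞).Adj C C') :
    ∀ a ∈ (C : Set α), ∀ b ∈ (C' : Set α), a ≠ b ∧ ¬ G.Adj a b := by
  intro a ha b hb
  constructor
  · rintro rfl
    exact h ⟨hne, Or.inl ⟨a, ha, hb⟩⟩
  · intro hadj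
    exact h ⟨hne, Or.inr ⟨a, ha, b, hb, hadj⟩⟩


end BlobAux

open BlobAux in
theorem stmt4 (r : ℕ) {α : Type*} (G : SimpleGraph α) (𝒞 : Set (Set α)) (h𝒞fin : 𝒞.Finite)
    (hconn : ∀ C ∈ 𝒞, (G.induce C).Connected)
    (hG : G.InducedFree (P5rK1 r)) : (blob G 𝒞).InducedFree (P5rK1 r) := by
  constructor
  intro e
  have eadj : ∀ {a b}, (blob G 𝒞).Adj (e a) (e b) ↔ (P5rK1 r).Adj a b :=
    fun {a b} => e.map_rel_iff
  have einj := e.injective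
  have T : ∀ i j : Fin 5, (pathGraph 5).Adj i j →
      ∃ a ∈ ((e (Sum.inl i)).1 : Set α), ∃ b ∈ ((e (Sum.inl j)).1 : Set α),
        a = b ∨ G.Adj a b := by
    intro i j h
    exact touch_of_adj (eadj.mpr (by simpa [P5rK1, SimpleGraph.sum_adj] using h))
  have antiCC : ∀ i j : Fin 5, i ≠ j → ¬ (pathGraph 5).Adj i j →
      ∀ a ∈ ((e (Sum.inl i)).1 : Set α), ∀ b ∈ ((e (Sum.inl j)).1 : Set α),
        a ≠ b ∧ ¬ G.Adj a b := by
    intro i j hij hna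
    refine anti_of_not_adj (fun hc => hij (Sum.inl_injective (einj hc))) (fun hadj => hna ?_)
    have := eadj.mp hadj
    simpa [P5rK1, SimpleGraph.sum_adj] using this
  have antiCD : ∀ (i : Fin 5) (j : Fin r),
      ∀ a ∈ ((e (Sum.inl i)).1 : Set α), ∀ b ∈ ((e (Sum.inr j)).1 : Set α),
        a ≠ b ∧ ¬ G.Adj a b := by
    intro i j
    refine anti_of_not_adj (fun hc => Sum.inl_ne_inr (einj hc)) (fun hadj => ?_)
    have := eadj.mp hadj
    simpa [P5rK1, SimpleGraph.sum_adj] using this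
  have antiDD : ∀ (j j' : Fin r), j ≠ j' →
      ∀ a ∈ ((e (Sum.inr j)).1 : Set α), ∀ b ∈ ((e (Sum.inr j')).1 : Set α),
        a ≠ b ∧ ¬ G.Adj a b := by
    intro j j' hjj
    refine anti_of_not_adj (fun hc => hjj (Sum.inr_injective (einj hc))) (fun hadj => ?_)
    have := eadj.mp hadj
    simpa [P5rK1, SimpleGraph.sum_adj] using this
  have hdex : ∀ j : Fin r, ((e (Sum.inr j)).1 : Set α).Nonempty := fun j =>
    Set.nonempty_coe_sort.mp (hconn _ (e (Sum.inr j)).2).nonempty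
  choose d hd using hdex
  obtain ⟨p0, p1, p2, p3, p4, hm0, hm1, hm2, hm3, hm4, A01, A12, A23, A34,
      N02, N03, N04, N13, N14, N24⟩ :=
    BlobAux.core (G := G) ((e (Sum.inl 0)).1) ((e (Sum.inl 1)).1) ((e (Sum.inl 2)).1)
      ((e (Sum.inl 3)).1) ((e (Sum.inl 4)).1)
      (hconn _ (e (Sum.inl 1)).2) (hconn _ (e (Sum.inl 2)).2) (hconn _ (e (Sum.inl 3)).2)
      (T 0 1 (by rw [pathGraph_adj]; decide)) (T 1 2 (by rw [pathGraph_adj]; decide))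
      (T 2 3 (by rw [pathGraph_adj]; decide)) (T 3 4 (by rw [pathGraph_adj]; decide))
      (antiCC 0 2 (by decide) (by rw [pathGraph_adj]; decide))
      (antiCC 0 3 (by decide) (by rw [pathGraph_adj]; decide))
      (antiCC 0 4 (by decide) (by rw [pathGraph_adj]; decide))
      (antiCC 1 3 (by decide) (by rw [pathGraph_adj]; decide))
      (antiCC 1 4 (by decide) (by rw [pathGraph_adj]; decide))
      (antiCC 2 4 (by decide) (by rw [pathGraph_adj]; decide))
  have hUD : ∀ a, a ∈ ((e (Sum.inl 0)).1 : Set α) ∪ (e (Sum.inl 1)).1 ∪ (e (Sum.inl 2)).1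
      ∪ (e (Sum.inl 3)).1 ∪ (e (Sum.inl 4)).1 →
      ∀ (j : Fin r), ∀ b ∈ ((e (Sum.inr j)).1 : Set α), a ≠ b ∧ ¬ G.Adj a b := by
    intro a ha j b hb
    rcases ha with ((((h | h) | h) | h) | h)
    · exact antiCD 0 j a h b hb
    · exact antiCD 1 j a h b hb
    · exact antiCD 2 j a h b hb
    · exact antiCD 3 j a h b hb
    · exact antiCD 4 j a h b hb
  -- symmetric facts
  have A10 := A01.symm; have A21 := A12.symm; have A32 := A23.symm; have A43 := A34.symm
  have R20 : ¬ G.Adj p2 p0 := fun h => N02.2 h.symm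
  have R30 : ¬ G.Adj p3 p0 := fun h => N03.2 h.symm
  have R40 : ¬ G.Adj p4 p0 := fun h => N04.2 h.symm
  have R31 : ¬ G.Adj p3 p1 := fun h => N13.2 h.symm
  have R41 : ¬ G.Adj p4 p1 := fun h => N14.2 h.symm
  have R42 : ¬ G.Adj p4 p2 := fun h => N24.2 h.symm
  have D01 := A01.ne; have D12 := A12.ne; have D23 := A23.ne; have D34 := A34.ne
  have D10 := A01.ne'; have D21 := A12.ne'; have D32 := A23.ne'; have D43 := A34.ne'
  have D02 := N02.1; have D03 := N03.1; have D04 := N04.1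
  have D13 := N13.1; have D14 := N14.1; have D24 := N24.1
  have D20 := Ne.symm N02.1
  have D30 := Ne.symm N03.1
  have D40 := Ne.symm N04.1
  have D31 := Ne.symm N13.1
  have D41 := Ne.symm N14.1
  have D42 := Ne.symm N24.1
  refine hG.false ⟨⟨Sum.elim ![p0, p1, p2, p3, p4] d, ?_⟩, ?_⟩
  · rintro (i | j) (i' | j') h
    · simp only [Sum.elim_inl] at h
      fin_cases i <;> fin_cases i'
      exacts [rfl, (D01 h).elim, (D02 h).elim, (D03 h).elim, (D04 h).elim,
          (D10 h).elim, rfl, (D12 h).elim, (D13 h).elim, (D14 h).elim,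
          (D20 h).elim, (D21 h).elim, rfl, (D23 h).elim, (D24 h).elim,
          (D30 h).elim, (D31 h).elim, (D32 h).elim, rfl, (D34 h).elim,
          (D40 h).elim, (D41 h).elim, (D42 h).elim, (D43 h).elim, rfl]
    · simp only [Sum.elim_inl, Sum.elim_inr] at h
      fin_cases i
      exacts [((hUD p0 hm0 j' (d j') (hd j')).1 h).elim,
          ((hUD p1 hm1 j' (d j') (hd j')).1 h).elim,
          ((hUD p2 hm2 j' (d j') (hd j')).1 h).elim,
          ((hUD p3 hm3 j' (d j') (hd j')).1 h).elim,
          ((hUD p4 hm4 j' (d j') (hd j')).1 h).elim]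
    · simp only [Sum.elim_inl, Sum.elim_inr] at h
      fin_cases i'
      exacts [((hUD p0 hm0 j (d j) (hd j)).1 h.symm).elim,
          ((hUD p1 hm1 j (d j) (hd j)).1 h.symm).elim,
          ((hUD p2 hm2 j (d j) (hd j)).1 h.symm).elim,
          ((hUD p3 hm3 j (d j) (hd j)).1 h.symm).elim,
          ((hUD p4 hm4 j (d j) (hd j)).1 h.symm).elim]
    · simp only [Sum.elim_inr] at h
      by_cases hjj : j = j'
      · exact congrArg _ hjj
      · exact ((antiDD j j' hjj (d j) (hd j) (d j') (hd j')).1 h).elim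
  · intro a b
    rcases a with i | j <;> rcases b with i' | j'
    · simp only [Sum.elim_inl, P5rK1, SimpleGraph.sum_adj, pathGraph_adj]
      fin_cases i <;> fin_cases i'
      exacts [iff_of_false (G.loopless.irrefl _) (by decide),
          iff_of_true A01 (by decide), iff_of_false N02.2 (by decide),
          iff_of_false N03.2 (by decide), iff_of_false N04.2 (by decide),
          iff_of_true A10 (by decide), iff_of_false (G.loopless.irrefl _) (by decide),
          iff_of_true A12 (by decide), iff_of_false N13.2 (by decide),
          iff_of_false N14.2 (by decide),
          iff_of_false R20 (by decide), iff_of_true A21 (by decide),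
          iff_of_false (G.loopless.irrefl _) (by decide), iff_of_true A23 (by decide),
          iff_of_false N24.2 (by decide),
          iff_of_false R30 (by decide), iff_of_false R31 (by decide),
          iff_of_true A32 (by decide), iff_of_false (G.loopless.irrefl _) (by decide),
          iff_of_true A34 (by decide),
          iff_of_false R40 (by decide), iff_of_false R41 (by decide),
          iff_of_false R42 (by decide), iff_of_true A43 (by decide),
          iff_of_false (G.loopless.irrefl _) (by decide)]
    · refine iff_of_false ?_ (by simp [P5rK1, SimpleGraph.sum_adj])
      fin_cases i
      exacts [(hUD p0 hm0 j' (d j') (hd j')).2, (hUD p1 hm1 j' (d j') (hd j')).2,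
          (hUD p2 hm2 j' (d j') (hd j')).2, (hUD p3 hm3 j' (d j') (hd j')).2,
          (hUD p4 hm4 j' (d j') (hd j')).2]
    · refine iff_of_false ?_ (by simp [P5rK1, SimpleGraph.sum_adj])
      fin_cases i'
      exacts [fun h => (hUD p0 hm0 j (d j) (hd j)).2 h.symm,
          fun h => (hUD p1 hm1 j (d j) (hd j)).2 h.symm,
          fun h => (hUD p2 hm2 j (d j) (hd j)).2 h.symm,
          fun h => (hUD p3 hm3 j (d j) (hd j)).2 h.symm,
          fun h => (hUD p4 hm4 j (d j) (hd j)).2 h.symm]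
    · refine iff_of_false ?_ (by simp [P5rK1, SimpleGraph.sum_adj])
      intro h
      by_cases hjj : j = j'
      · subst hjj; exact G.loopless.irrefl _ h
      · exact (antiDD j j' hjj (d j) (hd j) (d j') (hd j')).2 h
end

section
/- Let r ≥ 1 and k ≥ 1, let G be a (P5 + rK1)-free graph, and let P be an induced copy of P5 in G. If the induced subgraph on V(G) \ (V(P) ∪ N(V(P))) is k-colourable, then |V(G) \ (V(P) ∪ N(V(P)))| ≤ k(r−1). -/
open SimpleGraph

theorem stmt8 {α : Type*} [Fintype α] (r k : ℕ) (hr : 1 ≤ r) (hk : 1 ≤ k)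
    (G : SimpleGraph α) (hG : G.InducedFree (P5rK1 r)) (p : pathGraph 5 ↪g G)
    (hcol : (G.induce (Set.range p ∪ G.extN (Set.range p))ᶜ).Colorable k) :
    ((Set.range p ∪ G.extN (Set.range p))ᶜ : Set α).ncard ≤ k * (r - 1) := by
  classical
  set S : Set α := (Set.range p ∪ G.extN (Set.range p))ᶜ with hSdef
  obtain ⟨c⟩ := hcol
  -- basic facts about members of S
  have hSfacts : ∀ x ∈ S, x ∉ Set.range ⇑p ∧ ∀ i : Fin 5, ¬ G.Adj (p i) x := by
    intro x hx
    simp only [hSdef, Set.mem_compl_iff, Set.mem_union, not_or] at hx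
    obtain ⟨hx1, hx2⟩ := hx
    refine ⟨hx1, fun i hadj => hx2 ⟨hx1, ⟨p i, Set.mem_range_self i, hadj⟩⟩⟩
  -- each colour class has at most r - 1 vertices
  have key : ∀ i : Fin k, Fintype.card {v : S // c v = i} ≤ r - 1 := by
    intro i
    by_contra h
    push_neg at h
    have hle : r ≤ Fintype.card {v : S // c v = i} := by omega
    obtain ⟨g⟩ := Function.Embedding.nonempty_of_card_le
      ((Fintype.card_fin r).symm ▸ hle)
    -- build an embedding of P5 + rK1 into G
    refine hG.false (⟨⟨Sum.elim (fun i => p i) (fun j => ((g j : S) : α)), ?_⟩, ?_⟩)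
    · rintro (a | a) (b | b) hab <;>
        simp only [Sum.elim_inl, Sum.elim_inr] at hab
      · exact congrArg Sum.inl (p.injective hab)
      · exact absurd (hab ▸ Set.mem_range_self a)
          (hSfacts _ (g b : S).2).1
      · exact absurd (hab.symm ▸ Set.mem_range_self b)
          (hSfacts _ (g a : S).2).1
      · exact congrArg Sum.inr (g.injective (Subtype.ext (Subtype.ext hab)))
    · rintro (a | a) (b | b)
      · exact p.map_adj_iff
      · simp only [P5rK1, SimpleGraph.sum_adj, Function.Embedding.coeFn_mk, Sum.elim_inl,
          Sum.elim_inr]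
        constructor
        · intro hadj
          exact absurd hadj ((hSfacts _ (g b : S).2).2 a)
        · intro h; cases h
      · simp only [P5rK1, SimpleGraph.sum_adj, Function.Embedding.coeFn_mk, Sum.elim_inl,
          Sum.elim_inr]
        constructor
        · intro hadj
          exact absurd hadj.symm ((hSfacts _ (g a : S).2).2 b)
        · intro h; cases h
      · simp only [P5rK1, SimpleGraph.sum_adj, Function.Embedding.coeFn_mk, Sum.elim_inr,
          bot_adj, iff_false]
        intro hadj
        change G.Adj ((g a : S) : α) ((g b : S) : α) at hadj
        have hne : (g a : S) ≠ (g b : S) := by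
          intro hEq
          rw [hEq] at hadj
          exact G.irrefl hadj
        have : (G.induce S).Adj (g a : S) (g b : S) := by
          simpa using hadj
        exact c.valid this (by rw [(g a).2, (g b).2])
  -- sum up
  have hcard : S.ncard = Fintype.card S := by
    rw [Set.ncard_eq_toFinset_card', Set.toFinset_card]
  rw [hcard]
  have : Fintype.card S = ∑ i : Fin k, (Finset.univ.filter (fun v : S => c v = i)).card := by
    rw [← Finset.card_univ]
    exact Finset.card_eq_sum_card_fiberwise (fun x _ => Finset.mem_univ (c x))
  rw [this]
  calc ∑ i : Fin k, (Finset.univ.filter (fun v : S => c v = i)).card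
      ≤ ∑ _i : Fin k, (r - 1) := by
        refine Finset.sum_le_sum fun i _ => ?_
        have := key i
        rwa [Fintype.card_subtype] at this
    _ = k * (r - 1) := by simp [Finset.sum_const, mul_comm]
end

section
/- Let r ≥ 1 and let G be a (P5 + rK1)-free graph. Let v be a vertex and let y1, y2, y3 be three distinct pairwise non-adjacent neighbours of v. Suppose n1, n2, n3 are distinct vertices, each non-adjacent to v, such that for each i ∈ {1,2,3}, ni is adjacent to yi and non-adjacent to yj for all j ≠ i. Suppose Z is an independent set of size r that is anticomplete to {v, y1, y2, y3, n1, n2, n3}. Then this configuration is impossible. -/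
open SimpleGraph

section Helpers
open Matrix

lemma helperP5 {α : Type*} (r : ℕ) (G : SimpleGraph α)
    (a : Fin 5 → α) (hainj : Function.Injective a)
    (hadj : ∀ i j : Fin 5, G.Adj (a i) (a j) ↔ ((i:ℕ) + 1 = j ∨ (j:ℕ) + 1 = i))
    (Z : Set α) (hZ : ∀ ⦃x⦄, x ∈ Z → ∀ ⦃y⦄, y ∈ Z → ¬ G.Adj x y)
    (hZcard : Z.ncard = r) (hr : 1 ≤ r)
    (hdis : ∀ i, a i ∉ Z) (hanti : ∀ i, ∀ z ∈ Z, ¬ G.Adj (a i) z) :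
    Nonempty ((SimpleGraph.pathGraph 5 ⊕g (⊥ : SimpleGraph (Fin r))) ↪g G) := by
  have hZfin : Z.Finite := by
    by_contra h
    rw [Set.Infinite.ncard (by simpa using h)] at hZcard
    omega
  have : Finite Z := hZfin
  have e : Z ≃ Fin r := Finite.equivFinOfCardEq (by rw [Nat.card_coe_set_eq, hZcard])
  refine ⟨⟨⟨Sum.elim a (fun j => (e.symm j : α)), ?_⟩, ?_⟩⟩
  · rintro (i | i) (j | j) h <;> simp only [Sum.elim_inl, Sum.elim_inr] at h
    · exact congrArg Sum.inl (hainj h)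
    · exact absurd (h ▸ (e.symm j).2) (hdis i)
    · exact absurd (h ▸ (e.symm i).2) (hdis j)
    · exact congrArg Sum.inr (e.symm.injective (Subtype.ext h))
  · rintro (i | i) (j | j) <;>
      simp only [Sum.elim_inl, Sum.elim_inr, SimpleGraph.sum_adj, pathGraph_adj, bot_adj]
    · exact hadj i j
    · exact iff_of_false (hanti i _ (e.symm j).2) (by simp)
    · exact iff_of_false (fun h => hanti j _ (e.symm i).2 h.symm) (by simp)
    · exact iff_of_false (hZ (e.symm i).2 (e.symm j).2) (by simp)

lemma helperP5' {α : Type*} (r : ℕ) (G : SimpleGraph α)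
    (a0 a1 a2 a3 a4 : α)
    (h01 : G.Adj a0 a1) (h12 : G.Adj a1 a2) (h23 : G.Adj a2 a3) (h34 : G.Adj a3 a4)
    (h02 : ¬ G.Adj a0 a2) (h03 : ¬ G.Adj a0 a3) (h04 : ¬ G.Adj a0 a4)
    (h13 : ¬ G.Adj a1 a3) (h14 : ¬ G.Adj a1 a4) (h24 : ¬ G.Adj a2 a4)
    (Z : Set α) (hZ : ∀ ⦃x⦄, x ∈ Z → ∀ ⦃y⦄, y ∈ Z → ¬ G.Adj x y)
    (hZcard : Z.ncard = r) (hr : 1 ≤ r)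
    (hdis : ∀ x ∈ ({a0, a1, a2, a3, a4} : Set α), x ∉ Z)
    (hanti : ∀ x ∈ ({a0, a1, a2, a3, a4} : Set α), ∀ z ∈ Z, ¬ G.Adj x z) :
    Nonempty ((SimpleGraph.pathGraph 5 ⊕g (⊥ : SimpleGraph (Fin r))) ↪g G) := by
  have ne02 : a0 ≠ a2 := fun h => h03 (h ▸ h23)
  have ne03 : a0 ≠ a3 := fun h => h13 (by rw [h] at h01; exact h01.symm)
  have ne04 : a0 ≠ a4 := fun h => h14 (by rw [h] at h01; exact h01.symm)
  have ne13 : a1 ≠ a3 := fun h => h14 (h ▸ h34)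
  have ne14 : a1 ≠ a4 := fun h => h24 (by rw [h] at h12; exact h12.symm)
  have ne24 : a2 ≠ a4 := fun h => h14 (by rw [h] at h12; exact h12)
  have h10 := h01.symm; have h21 := h12.symm; have h32 := h23.symm; have h43 := h34.symm
  have h20 : ¬ G.Adj a2 a0 := fun h => h02 h.symm
  have h30 : ¬ G.Adj a3 a0 := fun h => h03 h.symm
  have h40 : ¬ G.Adj a4 a0 := fun h => h04 h.symm
  have h31 : ¬ G.Adj a3 a1 := fun h => h13 h.symm
  have h41 : ¬ G.Adj a4 a1 := fun h => h14 h.symm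
  have h42 : ¬ G.Adj a4 a2 := fun h => h24 h.symm
  refine helperP5 r G ![a0, a1, a2, a3, a4] ?_ ?_ Z hZ hZcard hr ?_ ?_
  · intro p q h
    fin_cases p <;> fin_cases q <;>
      simp only [cons_val_zero, cons_val_one, head_cons, cons_val_two, tail_cons,
        cons_val_three, cons_val_four, Fin.mk_zero, Fin.mk_one] at h ⊢ <;>
      first
      | rfl
      | exact absurd h h01.ne | exact absurd h h12.ne | exact absurd h h23.ne
      | exact absurd h h34.ne | exact absurd h h01.ne' | exact absurd h h12.ne'
      | exact absurd h h23.ne' | exact absurd h h34.ne'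
      | exact absurd h ne02 | exact absurd h ne03 | exact absurd h ne04
      | exact absurd h ne13 | exact absurd h ne14 | exact absurd h ne24
      | exact absurd h ne02.symm | exact absurd h ne03.symm | exact absurd h ne04.symm
      | exact absurd h ne13.symm | exact absurd h ne14.symm | exact absurd h ne24.symm
  · intro p q
    fin_cases p <;> fin_cases q <;>
      simp only [cons_val_zero, cons_val_one, head_cons, cons_val_two, tail_cons,
        cons_val_three, cons_val_four] <;>
      simp [h01, h12, h23, h34, h10, h21, h32, h43,
        h02, h03, h04, h13, h14, h24, h20, h30, h40, h31, h41, h42]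
  · intro i
    fin_cases i <;>
      simp only [cons_val_zero, cons_val_one, head_cons, cons_val_two, tail_cons,
        cons_val_three, cons_val_four]
    exacts [hdis a0 (by simp), hdis a1 (by simp), hdis a2 (by simp),
      hdis a3 (by simp), hdis a4 (by simp)]
  · intro i
    fin_cases i <;>
      simp only [cons_val_zero, cons_val_one, head_cons, cons_val_two, tail_cons,
        cons_val_three, cons_val_four]
    exacts [hanti a0 (by simp), hanti a1 (by simp), hanti a2 (by simp),
      hanti a3 (by simp), hanti a4 (by simp)]

end Helpers

theorem stmt12 {α : Type*} (r : ℕ) (hr : 1 ≤ r) (G : SimpleGraph α)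
    (hG : G.InducedFree (P5rK1 r)) (v : α) (y n : Fin 3 → α)
    (hy_inj : Function.Injective y) (hn_inj : Function.Injective n)
    (hyv : ∀ i, G.Adj v (y i)) (hyy : ∀ i j, i ≠ j → ¬ G.Adj (y i) (y j))
    (hnv : ∀ i, ¬ G.Adj v (n i))
    (hny : ∀ i j, G.Adj (n i) (y j) ↔ i = j)
    (Z : Set α) (hZ : G.IsIndep Z) (hZcard : Z.ncard = r)
    (hZanti : G.Anticomplete Z ({v} ∪ Set.range y ∪ Set.range n)) :
    False := by
  obtain ⟨hdisj, hanti⟩ := hZanti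
  have hmem : ∀ x, (x = v ∨ (∃ i, y i = x) ∨ (∃ i, n i = x)) →
      x ∈ ({v} ∪ Set.range y ∪ Set.range n : Set α) := by
    rintro x (rfl | h | h)
    · exact Or.inl (Or.inl rfl)
    · exact Or.inl (Or.inr h)
    · exact Or.inr h
  have key : ∀ S : Set α, (∀ x ∈ S, x ∈ ({v} ∪ Set.range y ∪ Set.range n : Set α)) →
      (∀ x ∈ S, x ∉ Z) ∧ (∀ x ∈ S, ∀ z ∈ Z, ¬ G.Adj x z) := by
    intro S hS
    exact ⟨fun x hx hz => (Set.disjoint_left.mp hdisj hz) (hS x hx),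
      fun x hx z hz h => hanti z hz x (hS x hx) h.symm⟩
  by_cases hall : ∀ i j : Fin 3, i ≠ j → G.Adj (n i) (n j)
  · -- triangle case: n2 - n0 - y0 - v - y1
    obtain ⟨hdis', hanti'⟩ := key {n 2, n 0, y 0, v, y 1} (by
      intro x hx
      simp only [Set.mem_insert_iff, Set.mem_singleton_iff] at hx
      rcases hx with rfl | rfl | rfl | rfl | rfl
      exacts [hmem _ (Or.inr (Or.inr ⟨_, rfl⟩)), hmem _ (Or.inr (Or.inr ⟨_, rfl⟩)),
        hmem _ (Or.inr (Or.inl ⟨_, rfl⟩)), hmem _ (Or.inl rfl),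
        hmem _ (Or.inr (Or.inl ⟨_, rfl⟩))])
    refine hG.false ((helperP5' r G (n 2) (n 0) (y 0) v (y 1)
      (hall 2 0 (by decide)) ((hny 0 0).mpr rfl) (hyv 0).symm (hyv 1)
      (fun h => (by decide : (2:Fin 3) ≠ 0) ((hny 2 0).mp h))
      (fun h => hnv 2 h.symm)
      (fun h => (by decide : (2:Fin 3) ≠ 1) ((hny 2 1).mp h))
      (fun h => hnv 0 h.symm)
      (fun h => (by decide : (0:Fin 3) ≠ 1) ((hny 0 1).mp h))
      (hyy 0 1 (by decide))
      Z hZ hZcard hr hdis' hanti').some)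
  · push_neg at hall
    obtain ⟨i, j, hij, hnadj⟩ := hall
    obtain ⟨hdis', hanti'⟩ := key {n i, y i, v, y j, n j} (by
      intro x hx
      simp only [Set.mem_insert_iff, Set.mem_singleton_iff] at hx
      rcases hx with rfl | rfl | rfl | rfl | rfl
      exacts [hmem _ (Or.inr (Or.inr ⟨_, rfl⟩)), hmem _ (Or.inr (Or.inl ⟨_, rfl⟩)),
        hmem _ (Or.inl rfl), hmem _ (Or.inr (Or.inl ⟨_, rfl⟩)),
        hmem _ (Or.inr (Or.inr ⟨_, rfl⟩))])
    refine hG.false ((helperP5' r G (n i) (y i) v (y j) (n j)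
      ((hny i i).mpr rfl) (hyv i).symm (hyv j) ((hny j j).mpr rfl).symm
      (fun h => hnv i h.symm)
      (fun h => hij ((hny i j).mp h))
      hnadj
      (hyy i j hij)
      (fun h => hij.symm ((hny j i).mp h.symm))
      (hnv j)
      Z hZ hZcard hr hdis' hanti').some)
end
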